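/- Let G be a group acting on a set X, let ℓ : X → ℕ and h : X → A (A an additive abelian group) be G-invariant functions, and let Y ⊆ X be a G-invariant subset. Suppose σ : X → X is a G-equivariant involution such that σ(x) = x if and only if x ∈ Y, and for every x ∉ Y one has h(σ(x)) = h(x) and ℓ(σ(x)) = ℓ(x) + 1 or ℓ(σ(x)) + 1 = ℓ(x). If X has only finitely many G-orbits, then the sum over a set of G-orbit representatives x of X of (−1)^{ℓ(x)} h(x) equals the sum over a set of G-orbit representatives y of Y of (−1)^{ℓ(y)} h(y). -/
import Mathlib


/-- Let `G` be a group acting on a set `X`, let `ℓ : X → ℕ` and `h : X → A` (`A` an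
additive abelian group) be `G`-invariant functions, and let `Y ⊆ X` be a `G`-invariant
subset.  Suppose `σ : X → X` is a `G`-equivariant involution whose fixed-point set is
exactly `Y`, and such that for every `x ∉ Y` one has `h (σ x) = h x` and
`ℓ (σ x) = ℓ x + 1` or `ℓ (σ x) + 1 = ℓ x`.  If `X` has only finitely many `G`-orbits
(encoded by a finite set `R` of orbit representatives for `X`, with `R'` a finite set
of orbit representatives for `Y`), then
`∑_{x ∈ R} (−1)^{ℓ x} h x = ∑_{y ∈ R'} (−1)^{ℓ y} h y`. -/
theorem alternating_sum_orbitRep_eq_of_involution {G X A : Type*} [Group G] [MulAction G X]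
    [AddCommGroup A] (ℓ : X → ℕ) (h : X → A)
    (hℓ : ∀ (g : G) (x : X), ℓ (g • x) = ℓ x)
    (hh : ∀ (g : G) (x : X), h (g • x) = h x)
    (Y : Set X) (hY : ∀ (g : G) (x : X), x ∈ Y → g • x ∈ Y)
    (σ : X → X)
    (hinvol : ∀ x, σ (σ x) = x)
    (hequiv : ∀ (g : G) (x : X), σ (g • x) = g • σ x)
    (hfix : ∀ x, σ x = x ↔ x ∈ Y)
    (hout : ∀ x ∉ Y, h (σ x) = h x ∧ (ℓ (σ x) = ℓ x + 1 ∨ ℓ (σ x) + 1 = ℓ x))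
    (R R' : Finset X)
    (hR : ∀ x : X, ∃! r, r ∈ R ∧ r ∈ MulAction.orbit G x)
    (hR'Y : ∀ r ∈ R', r ∈ Y)
    (hR' : ∀ y ∈ Y, ∃! r, r ∈ R' ∧ r ∈ MulAction.orbit G y) :
    ∑ x ∈ R, (-1 : ℤ) ^ ℓ x • h x = ∑ y ∈ R', (-1 : ℤ) ^ ℓ y • h y := by
  classical
  -- invariance along orbits
  have hinv : ∀ {a b : X}, a ∈ MulAction.orbit G b → ℓ a = ℓ b ∧ h a = h b := by
    rintro a b ⟨g, rfl⟩; exact ⟨hℓ g b, hh g b⟩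
  have hsymm : ∀ {a b : X}, a ∈ MulAction.orbit G b → b ∈ MulAction.orbit G a := by
    rintro a b ⟨g, rfl⟩; exact ⟨g⁻¹, by simp⟩
  have hYorb : ∀ {a b : X}, a ∈ MulAction.orbit G b → a ∈ Y → b ∈ Y := by
    rintro a b ⟨g, rfl⟩ hgY
    have e := hequiv g b
    rw [(hfix _).2 hgY] at e
    exact (hfix b).1 (smul_left_cancel g e.symm)
  set rep : X → X := fun x => (hR x).choose with hrep
  have rep_mem : ∀ x, rep x ∈ R := fun x => (hR x).choose_spec.1.1
  have rep_orb : ∀ x, rep x ∈ MulAction.orbit G x := fun x => (hR x).choose_spec.1.2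
  have rep_uniq : ∀ x r, r ∈ R → r ∈ MulAction.orbit G x → r = rep x :=
    fun x r h1 h2 => (hR x).choose_spec.2 r ⟨h1, h2⟩
  set rep' : X → X := fun y => if hy : y ∈ Y then (hR' y hy).choose else y with hrep'
  have rep'_mem : ∀ y (hy : y ∈ Y), rep' y ∈ R' := by
    intro y hy; simp only [hrep', dif_pos hy]; exact (hR' y hy).choose_spec.1.1
  have rep'_orb : ∀ y (hy : y ∈ Y), rep' y ∈ MulAction.orbit G y := by
    intro y hy; simp only [hrep', dif_pos hy]; exact (hR' y hy).choose_spec.1.2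
  have rep'_uniq : ∀ y (hy : y ∈ Y) r, r ∈ R' → r ∈ MulAction.orbit G y → r = rep' y := by
    intro y hy r h1 h2; simp only [hrep', dif_pos hy]; exact (hR' y hy).choose_spec.2 r ⟨h1, h2⟩
  rw [← Finset.sum_filter_add_sum_filter_not R (· ∈ Y)]
  have hzero : ∑ x ∈ R.filter (fun x => ¬ x ∈ Y), (-1 : ℤ) ^ ℓ x • h x = 0 := by
    apply Finset.sum_involution (fun a _ => rep (σ a))
    · intro a ha
      obtain ⟨-, haY⟩ := Finset.mem_filter.mp ha
      obtain ⟨hhσ, hℓσ⟩ := hout a haY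
      obtain ⟨e1, e2⟩ := hinv (rep_orb (σ a))
      rw [e1, e2, hhσ, ← add_smul]
      rcases hℓσ with e | e
      · rw [e, pow_succ]; ring_nf; simp
      · rw [← e, pow_succ]; ring_nf; simp
    · intro a ha _
      obtain ⟨-, haY⟩ := Finset.mem_filter.mp ha
      obtain ⟨-, hℓσ⟩ := hout a haY
      intro hcontra
      have horb2 := rep_orb (σ a)
      rw [hcontra] at horb2
      have := (hinv horb2).1
      omega
    · intro a ha
      obtain ⟨-, haY⟩ := Finset.mem_filter.mp ha
      have hσY : σ a ∉ Y := by
        intro hc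
        have e : σ (σ a) = σ a := (hfix (σ a)).2 hc
        rw [hinvol] at e
        exact haY ((hfix a).1 e.symm)
      refine Finset.mem_filter.mpr ⟨rep_mem _, fun hc => hσY (hYorb (rep_orb (σ a)) hc)⟩
    · intro a ha
      obtain ⟨g, hg⟩ := rep_orb (σ a)
      have : σ (rep (σ a)) = g • a := by rw [← hg, hequiv, hinvol]
      refine (rep_uniq _ a (Finset.mem_filter.mp ha).1 ?_).symm
      exact ⟨g⁻¹, by rw [this]; simp⟩
  rw [hzero, add_zero]
  refine Finset.sum_nbij' rep' rep ?_ ?_ ?_ ?_ ?_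
  · intro x hx
    exact rep'_mem x (Finset.mem_filter.mp hx).2
  · intro y hy
    have hyY := hR'Y y hy
    refine Finset.mem_filter.mpr ⟨rep_mem y, ?_⟩
    obtain ⟨g, hg⟩ := rep_orb y
    exact hg ▸ hY g y hyY
  · intro x hx
    obtain ⟨hxR, hxY⟩ := Finset.mem_filter.mp hx
    exact (rep_uniq (rep' x) x hxR (hsymm (rep'_orb x hxY))).symm
  · intro y hy
    have hyY := hR'Y y hy
    have hrY : rep y ∈ Y := by
      obtain ⟨g, hg⟩ := rep_orb y; exact hg ▸ hY g y hyY
    exact (rep'_uniq (rep y) hrY y hy (hsymm (rep_orb y))).symm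
  · intro x hx
    obtain ⟨-, hxY⟩ := Finset.mem_filter.mp hx
    obtain ⟨e1, e2⟩ := hinv (rep'_orb x hxY)
    rw [e1, e2]
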